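/- arXiv:2511.12211 — 4 statements merged into one kernel-verified Lean document; each statement's English description precedes it below -/
import Mathlib

section
/- Let A and B be abelian categories, with A having enough injectives, and let F : A → B be an additive left exact functor. Assume there is an integer d ≥ 0 such that the classical right derived functors satisfy R^p F(M) = 0 for every object M of A and every p > d. Let c₁ be an integer, let K be a bounded-below cochain complex over A with H^i(K) = 0 for all i > c₁, and let K → I be a quasi-isomorphism into a bounded-below cochain complex I of injective objects of A. Then H^i(F(I)) = 0 for all i > c₁ + d, where F(I) denotes the complex obtained by applying F termwise to I. -/
open CategoryTheory Limits

universe v u v₂ u₂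

namespace DerivedBoundAux

open HomologicalComplex CategoryTheory Limits

/-- The embedding of complex shapes `ℕ ↪ ℤ`, `p ↦ a + p`. -/
def emb (a : ℤ) : ComplexShape.Embedding (ComplexShape.up ℕ) (ComplexShape.up ℤ) :=
  ComplexShape.Embedding.mk' _ _ (fun p => a + p)
    (fun p q h => by simp only at h; omega)
    (fun p q => by
      simp only [ComplexShape.up_Rel]
      omega)

instance (a : ℤ) : (emb a).IsRelIff := by unfold emb; exact ComplexShape.Embedding.instIsRelIffMk' _ _ _ _ _

lemma emb_f (a : ℤ) (p : ℕ) : (emb a).f p = a + p := rfl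

variable {D : Type*} [Category D] [Abelian D]


lemma restriction_d_comm {ι ι' : Type*} {c : ComplexShape ι} {c' : ComplexShape ι'}
    (J : HomologicalComplex D c') (e : ComplexShape.Embedding c c') [e.IsRelIff]
    {p q : ι} {p' q' : ι'} (hp : e.f p = p') (hq : e.f q = q') :
    (J.restrictionXIso e hp).hom ≫ J.d p' q' =
      J.d (e.f p) (e.f q) ≫ (J.restrictionXIso e hq).hom := by
  subst hp hq
  simp [restrictionXIso]
  exact (Category.id_comp _).trans (Category.comp_id _).symm

/-- homology of the restriction along `emb a`, in positive degrees. -/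
noncomputable def restrictionHomologyIso (J : CochainComplex D ℤ) (a : ℤ) (n : ℕ) :
    (J.restriction (emb a)).homology (n + 1) ≅ J.homology (a + (n : ℤ) + 1) :=
  HomologicalComplex.homologyIsoSc' _ n (n + 1) (n + 2) (by simp) (by simp) ≪≫
    ShortComplex.homologyMapIso
      (ShortComplex.isoMk
        (J.restrictionXIso (emb a) (show (emb a).f n = a + (n : ℤ) by
          rw [emb_f]))
        (J.restrictionXIso (emb a) (show (emb a).f (n + 1) = a + (n : ℤ) + 1 by
          rw [emb_f]; push_cast; ring))
        (J.restrictionXIso (emb a) (show (emb a).f (n + 2) = a + (n : ℤ) + 1 + 1 by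
          rw [emb_f]; push_cast; ring))
        (by
          dsimp [HomologicalComplex.sc', HomologicalComplex.shortComplexFunctor']
          exact restriction_d_comm J (emb a) rfl
            (show (emb a).f (n + 1) = a + (n : ℤ) + 1 by rw [emb_f]; push_cast; ring))
        (by
          dsimp [HomologicalComplex.sc', HomologicalComplex.shortComplexFunctor']
          exact restriction_d_comm J (emb a)
            (show (emb a).f (n + 1) = a + (n : ℤ) + 1 by rw [emb_f]; push_cast; ring)
            (show (emb a).f (n + 2) = a + (n : ℤ) + 1 + 1 by rw [emb_f]; push_cast; ring))) ≪≫
    (J.homologyIsoSc' (a + (n : ℤ)) (a + (n : ℤ) + 1) (a + (n : ℤ) + 1 + 1)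
      (by simp) (by simp)).symm

end DerivedBoundAux

open DerivedBoundAux HomologicalComplex

/-- **Bound on the cohomology of a derived functor applied to an injective resolution.**
Let `F : A ⥤ B` be an additive left exact functor between abelian categories, where `A`
has enough injectives, and suppose there is `d ≥ 0` with `R^p F (M) = 0` for every
object `M` and every `p > d`.  If `K` is a bounded-below cochain complex with
`H^i(K) = 0` for `i > c₁` and `K ⟶ I` is a quasi-isomorphism to a bounded-below complex
of injectives, then `H^i(F(I)) = 0` for all `i > c₁ + d`. -/
theorem homology_map_injective_resolution_isZero_of_rightDerived_bounded
    {A : Type u} [Category.{v} A] {B : Type u₂} [Category.{v₂} B]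
    [Abelian A] [Abelian B] [EnoughInjectives A]
    (F : A ⥤ B) [F.Additive] [PreservesFiniteLimits F]
    (d : ℕ)
    (hd : ∀ (M : A) (p : ℕ), d < p → IsZero ((F.rightDerived p).obj M))
    (c₁ : ℤ)
    (K I : CochainComplex A ℤ)
    (a : ℤ) (hKa : ∀ i : ℤ, i < a → IsZero (K.X i))
    (b : ℤ) (hIb : ∀ i : ℤ, i < b → IsZero (I.X i))
    (hK : ∀ i : ℤ, c₁ < i → IsZero (K.homology i))
    (hI : ∀ i : ℤ, Injective (I.X i))
    (φ : K ⟶ I) [QuasiIso φ] :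
    ∀ i : ℤ, c₁ + (d : ℤ) < i →
      IsZero (((F.mapHomologicalComplex (ComplexShape.up ℤ)).obj I).homology i) := by
  -- cohomology of I vanishes above c₁
  have hIexact : ∀ t : ℤ, c₁ < t → I.ExactAt t := by
    intro t ht
    rw [HomologicalComplex.exactAt_iff_isZero_homology]
    exact (hK t ht).of_iso (isoOfQuasiIsoAt φ t).symm
  intro j hj
  obtain ⟨i, rfl, hic⟩ : ∃ i : ℤ, j = i + (d : ℤ) + 1 ∧ c₁ ≤ i :=
    ⟨j - d - 1, by omega, by omega⟩
  set C : CochainComplex A ℕ := I.restriction (emb i) with hC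
  set Z : A := kernel (C.d 0 1) with hZ
  -- C is an injective resolution of Z
  let R : InjectiveResolution Z :=
    { cocomplex := C
      injective := fun n => hI _
      ι := (CochainComplex.fromSingle₀Equiv C Z).symm ⟨kernel.ι _, kernel.condition _⟩
      quasiIso := ⟨fun n => by
        cases n with
        | zero =>
          rw [CochainComplex.quasiIsoAt₀_iff, ShortComplex.quasiIso_iff_of_zeros]
          · refine ⟨?_, ?_⟩
            · refine ShortComplex.exact_of_f_is_kernel _ ?_
              refine IsLimit.ofIsoLimit (kernelIsKernel (C.d 0 1)) (Fork.ext (Iso.refl _) ?_)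
              exact (Category.id_comp _).trans (CochainComplex.fromSingle₀Equiv_symm_apply_f_zero _ _)
            · rw [show ((HomologicalComplex.shortComplexFunctor' A
                  (ComplexShape.up ℕ) 0 0 1).map
                  ((CochainComplex.fromSingle₀Equiv C Z).symm
                    ⟨kernel.ι _, kernel.condition _⟩)).τ₂ =
                  kernel.ι (C.d 0 1) from
                CochainComplex.fromSingle₀Equiv_symm_apply_f_zero _ _]
              exact (inferInstance : Mono (kernel.ι (C.d 0 1)))
          · rfl
          · rfl
          · exact C.shape 0 0 (by simp)
        | succ n =>
          rw [quasiIsoAt_iff_exactAt]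
          · rw [HomologicalComplex.exactAt_iff_isZero_homology]
            exact IsZero.of_iso
              ((HomologicalComplex.exactAt_iff_isZero_homology _ _).1
                (hIexact (i + (n : ℤ) + 1) (by omega)))
              (restrictionHomologyIso I i n)
          · exact CochainComplex.exactAt_succ_single_obj _ _⟩ }
  have h1 : IsZero ((F.rightDerived (d + 1)).obj Z) := hd Z (d + 1) (by omega)
  have h2 : IsZero (((F.mapHomologicalComplex (ComplexShape.up ℕ)).obj C).homology (d + 1)) :=
    h1.of_iso (R.isoRightDerivedObj F (d + 1)).symm
  have hEq : (F.mapHomologicalComplex (ComplexShape.up ℕ)).obj C =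
      ((F.mapHomologicalComplex (ComplexShape.up ℤ)).obj I).restriction (emb i) := rfl
  rw [hEq] at h2
  exact h2.of_iso
    (restrictionHomologyIso ((F.mapHomologicalComplex (ComplexShape.up ℤ)).obj I) i d).symm
end

section
/- Let S be a topological space, let E be a complex Banach space, and let P : S → L(E) be a map into the bounded linear operators on E that is continuous for the operator norm. Assume that for every s ∈ S the operator P(s) is idempotent, i.e. P(s) ∘ P(s) = P(s), and has finite-dimensional range. Then the function sending s to the complex dimension of range(P(s)) is locally constant on S. -/
/-- If `P` and `Q` are idempotent bounded operators with `‖P - Q‖ < 1` and `Q` has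
finite-dimensional range, then `rank P ≤ rank Q`. -/
lemma finrank_range_le_of_idem_close
    {E : Type*} [NormedAddCommGroup E] [NormedSpace ℂ E]
    (P Q : E →L[ℂ] E) (hP : P.comp P = P) (h : ‖P - Q‖ < 1)
    [FiniteDimensional ℂ (LinearMap.range (Q : E →ₗ[ℂ] E))] :
    Module.finrank ℂ (LinearMap.range (P : E →ₗ[ℂ] E)) ≤ Module.finrank ℂ (LinearMap.range (Q : E →ₗ[ℂ] E)) := by
  have hmaps : ∀ x ∈ LinearMap.range (P : E →ₗ[ℂ] E), Q x ∈ LinearMap.range (Q : E →ₗ[ℂ] E) := fun x _ => ⟨x, rfl⟩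
  set f : LinearMap.range (P : E →ₗ[ℂ] E) →ₗ[ℂ] LinearMap.range (Q : E →ₗ[ℂ] E) :=
    (Q : E →ₗ[ℂ] E).restrict hmaps with hf
  have hfix : ∀ x ∈ LinearMap.range (P : E →ₗ[ℂ] E), P x = x := by
    rintro x ⟨y, rfl⟩
    conv_rhs => rw [← hP]
    rfl
  have hinj : Function.Injective f := by
    rw [← LinearMap.ker_eq_bot, LinearMap.ker_eq_bot']
    rintro ⟨x, hx⟩ hfx
    have hQx : Q x = 0 := congrArg Subtype.val hfx
    have : ‖x‖ ≤ ‖P - Q‖ * ‖x‖ := by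
      calc ‖x‖ = ‖(P - Q) x‖ := by
            simp [ContinuousLinearMap.sub_apply, hfix x hx, hQx]
        _ ≤ ‖P - Q‖ * ‖x‖ := (P - Q).le_opNorm x
    have hx0 : x = 0 := by
      by_contra hne
      have hxpos : 0 < ‖x‖ := norm_pos_iff.mpr hne
      nlinarith
    exact Subtype.ext hx0
  exact LinearMap.finrank_le_finrank_of_injective hinj

/-- **Local constancy of the rank of a continuous family of finite-rank idempotents.**
Let `S` be a topological space, `E` a complex Banach space, and `P : S → L(E)` a map into
the bounded linear operators on `E`, continuous for the operator norm, such that each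
`P s` is idempotent with finite-dimensional range.  Then `s ↦ dim_ℂ range(P s)` is
locally constant on `S`. -/
theorem isLocallyConstant_finrank_range_of_continuous_idempotents
    {S : Type*} [TopologicalSpace S]
    {E : Type*} [NormedAddCommGroup E] [NormedSpace ℂ E] [CompleteSpace E]
    (P : S → (E →L[ℂ] E)) (hP : Continuous P)
    (hidem : ∀ s : S, (P s).comp (P s) = P s)
    (hfin : ∀ s : S, FiniteDimensional ℂ (LinearMap.range (P s : E →ₗ[ℂ] E))) :
    IsLocallyConstant (fun s : S => Module.finrank ℂ (LinearMap.range (P s : E →ₗ[ℂ] E))) := by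
  rw [IsLocallyConstant.iff_exists_open]
  intro s
  refine ⟨{t | ‖P t - P s‖ < 1}, ?_, by simp, ?_⟩
  · have : Continuous fun t => ‖P t - P s‖ := (hP.sub continuous_const).norm
    exact isOpen_lt this continuous_const
  · intro t ht
    have ht' : ‖P t - P s‖ < 1 := ht
    have hts : ‖P s - P t‖ < 1 := by rwa [norm_sub_rev]
    haveI := hfin s; haveI := hfin t
    exact le_antisymm
      (finrank_range_le_of_idem_close (P t) (P s) (hidem t) ht')
      (finrank_range_le_of_idem_close (P s) (P t) (hidem s) hts)
end

section
/- Let S be a topological space, let E be a complex Banach space, and let P : S → L(E) be a map into the bounded linear operators on E that is continuous for the operator norm, such that for every s ∈ S the operator P(s) is idempotent (P(s) ∘ P(s) = P(s)) and has finite-dimensional range. Then for every point s₀ ∈ S there exists an open neighborhood U of s₀ in S such that for every s ∈ U, the restriction of P(s) to range(P(s₀)) is a linear isomorphism from range(P(s₀)) onto range(P(s)). -/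
/-- If `p` is idempotent and `‖q - p‖ < 1`, then `q` is injective on the range of `p`. -/
lemma aux_inj_on_range {E : Type*} [NormedAddCommGroup E] [NormedSpace ℂ E]
    (p q : E →L[ℂ] E) (hp : p.comp p = p) (h : ‖q - p‖ < 1) :
    ∀ x ∈ LinearMap.range (p : E →ₗ[ℂ] E), q x = 0 → x = 0 := by
  intro x hx hqx
  obtain ⟨y, rfl⟩ := hx
  set x := p y with hxdef
  have hpx : p x = x := by
    rw [hxdef]
    exact congrFun (congrArg DFunLike.coe hp) y
  have h1 : ‖x‖ ≤ ‖q - p‖ * ‖x‖ := by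
    have := (q - p).le_opNorm x
    simpa [hpx, show q x = 0 from hqx, norm_neg] using this
  by_contra hne
  have hxpos : 0 < ‖x‖ := norm_pos_iff.mpr hne
  nlinarith

/-- **Local triviality of the ranges of a continuous family of finite-rank idempotents.**
Let `S` be a topological space, `E` a complex Banach space, and `P : S → L(E)` a norm
continuous map such that each `P s` is idempotent with finite-dimensional range.  Then
every `s₀ ∈ S` has an open neighbourhood `U` such that for every `s ∈ U` the restriction
of `P s` to `range (P s₀)` is a linear isomorphism from `range (P s₀)` onto
`range (P s)`. -/
theorem restriction_isomorphism_of_continuous_idempotents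
    {S : Type*} [TopologicalSpace S]
    {E : Type*} [NormedAddCommGroup E] [NormedSpace ℂ E] [CompleteSpace E]
    (P : S → (E →L[ℂ] E)) (hP : Continuous P)
    (hidem : ∀ s : S, (P s).comp (P s) = P s)
    (hfin : ∀ s : S, FiniteDimensional ℂ (LinearMap.range (P s : E →ₗ[ℂ] E)))
    (s₀ : S) :
    ∃ U : Set S, IsOpen U ∧ s₀ ∈ U ∧ ∀ s ∈ U,
      Function.Bijective (fun x : LinearMap.range (P s₀ : E →ₗ[ℂ] E) =>
        (⟨P s x, LinearMap.mem_range_self (P s : E →ₗ[ℂ] E) (x : E)⟩ :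
          LinearMap.range (P s : E →ₗ[ℂ] E))) := by
  refine ⟨{s | ‖P s - P s₀‖ < 1}, ?_, ?_, ?_⟩
  · exact isOpen_lt ((hP.sub continuous_const).norm) continuous_const
  · simp
  · intro s hs
    have hs' : ‖P s - P s₀‖ < 1 := hs
    have := hfin s; have := hfin s₀
    -- the linear map from range (P s₀) to range (P s)
    let f : LinearMap.range (P s₀ : E →ₗ[ℂ] E) →ₗ[ℂ] LinearMap.range (P s : E →ₗ[ℂ] E) :=
      LinearMap.codRestrict (LinearMap.range (P s : E →ₗ[ℂ] E))
        (((P s) : E →ₗ[ℂ] E).comp (LinearMap.range (P s₀ : E →ₗ[ℂ] E)).subtype)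
        (fun x => LinearMap.mem_range_self (P s : E →ₗ[ℂ] E) (x : E))
    let g : LinearMap.range (P s : E →ₗ[ℂ] E) →ₗ[ℂ] LinearMap.range (P s₀ : E →ₗ[ℂ] E) :=
      LinearMap.codRestrict (LinearMap.range (P s₀ : E →ₗ[ℂ] E))
        (((P s₀) : E →ₗ[ℂ] E).comp (LinearMap.range (P s : E →ₗ[ℂ] E)).subtype)
        (fun x => LinearMap.mem_range_self (P s₀ : E →ₗ[ℂ] E) (x : E))
    have hfinj : Function.Injective f := by
      rw [← LinearMap.ker_eq_bot, LinearMap.ker_eq_bot']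
      intro ⟨x, hx⟩ hfx
      have hqx : P s x = 0 := by
        have := congrArg (Subtype.val) hfx
        exact this
      exact Subtype.ext (aux_inj_on_range (P s₀) (P s) (hidem s₀) hs' x hx hqx)
    have hginj : Function.Injective g := by
      rw [← LinearMap.ker_eq_bot, LinearMap.ker_eq_bot']
      intro ⟨x, hx⟩ hgx
      have hqx : P s₀ x = 0 := by
        have := congrArg (Subtype.val) hgx
        exact this
      have h' : ‖P s₀ - P s‖ < 1 := by rwa [norm_sub_rev]
      exact Subtype.ext (aux_inj_on_range (P s) (P s₀) (hidem s) h' x hx hqx)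
    have hdim : Module.finrank ℂ (LinearMap.range (P s₀ : E →ₗ[ℂ] E))
        = Module.finrank ℂ (LinearMap.range (P s : E →ₗ[ℂ] E)) :=
      le_antisymm (LinearMap.finrank_le_finrank_of_injective hfinj)
        (LinearMap.finrank_le_finrank_of_injective hginj)
    have hfsurj : Function.Surjective f :=
      (LinearMap.injective_iff_surjective_of_finrank_eq_finrank hdim).mp hfinj
    exact ⟨hfinj, hfsurj⟩
end

section
/- Let E be a complex Banach space equipped with a finite grading, i.e. continuous linear projections π₀, …, π_m on E with π_i ∘ π_j = 0 for i ≠ j and π₀ + ⋯ + π_m = id, and set E_i = range(π_i). Let T and T' be bounded linear operators on E such that T preserves each E_i, and such that N := T' − T strictly raises the grading, i.e. N(E_i) ⊆ E_{i+1} + ⋯ + E_m for every i (in particular N(E_m) = 0). Then for every λ ∈ ℂ not in the spectrum of T, λ is not in the spectrum of T', and (λ·id − T')⁻¹ = (λ·id − T)⁻¹ ∘ ( Σ_{i=0}^{m} (N ∘ (λ·id − T)⁻¹)^i ). In particular the spectrum of T' is contained in the spectrum of T. -/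
open scoped BigOperators

/-- **Resolvents of graded perturbations.**
Let `E` be a complex Banach space with a finite grading given by continuous linear
projections `π 0, …, π m` with `π i ∘ π j = 0` for `i ≠ j` and `π 0 + ⋯ + π m = id`, and
let `E_i = range (π i)`.  Let `T, T'` be bounded operators such that `T` preserves each
`E_i` and `N := T' − T` strictly raises the grading.  Then for every `λ ∉ spectrum T`,
`λ ∉ spectrum T'` and
`(λ − T')⁻¹ = (λ − T)⁻¹ ∘ (Σ_{i=0}^{m} (N ∘ (λ − T)⁻¹)^i)`.
In particular `spectrum T' ⊆ spectrum T`. -/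
theorem spectrum_subset_of_graded_perturbation
    {E : Type*} [NormedAddCommGroup E] [NormedSpace ℂ E] [CompleteSpace E]
    (m : ℕ) (π : Fin (m + 1) → (E →L[ℂ] E))
    (hproj : ∀ i, (π i).comp (π i) = π i)
    (horth : ∀ i j, i ≠ j → (π i).comp (π j) = 0)
    (hsum : ∑ i, π i = ContinuousLinearMap.id ℂ E)
    (T T' : E →L[ℂ] E)
    (hT : ∀ (i) (x : E), x ∈ LinearMap.range (π i : E →ₗ[ℂ] E) → T x ∈ LinearMap.range (π i : E →ₗ[ℂ] E))
    (hN : ∀ (i) (x : E), x ∈ LinearMap.range (π i : E →ₗ[ℂ] E) →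
      (T' - T) x ∈ (⨆ j > i, LinearMap.range (π j : E →ₗ[ℂ] E) : Submodule ℂ E)) :
    (∀ z : ℂ, z ∉ spectrum ℂ T →
      z ∉ spectrum ℂ T' ∧
      Ring.inverse (algebraMap ℂ (E →L[ℂ] E) z - T') =
        Ring.inverse (algebraMap ℂ (E →L[ℂ] E) z - T) *
          ∑ i ∈ Finset.range (m + 1),
            ((T' - T) * Ring.inverse (algebraMap ℂ (E →L[ℂ] E) z - T)) ^ i) ∧
    spectrum ℂ T' ⊆ spectrum ℂ T := by
  classical
  -- basic facts about the projections
  have hmem : ∀ (i) (x : E), x ∈ LinearMap.range (π i : E →ₗ[ℂ] E) ↔ π i x = x := by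
    intro i x
    constructor
    · rintro ⟨y, rfl⟩
      have := ContinuousLinearMap.ext_iff.mp (hproj i) y
      simpa [ContinuousLinearMap.comp_apply] using this
    · intro h; exact ⟨x, h⟩
  have horth' : ∀ (i j) (x : E), i ≠ j → x ∈ LinearMap.range (π j : E →ₗ[ℂ] E) → π i x = 0 := by
    rintro i j x hij ⟨y, rfl⟩
    have := ContinuousLinearMap.ext_iff.mp (horth i j hij) y
    simpa [ContinuousLinearMap.comp_apply] using this
  have hid : ∀ x : E, ∑ j, π j x = x := by
    intro x
    have := ContinuousLinearMap.ext_iff.mp hsum x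
    simpa [ContinuousLinearMap.sum_apply] using this
  have hcomm : ∀ i, π i * T = T * π i := by
    intro i
    ext x
    have h1 : T x = ∑ j, T (π j x) := by
      conv_lhs => rw [← hid x]
      simp [map_sum]
    rw [ContinuousLinearMap.mul_apply, ContinuousLinearMap.mul_apply, h1, map_sum,
      Finset.sum_eq_single i]
    · exact (hmem i _).mp (hT i _ ⟨x, rfl⟩)
    · intro j _ hj
      exact horth' i j _ (Ne.symm hj) (hT j _ ⟨x, rfl⟩)
    · simp
  -- the per-point statement
  have key : ∀ z : ℂ, z ∉ spectrum ℂ T →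
      z ∉ spectrum ℂ T' ∧
      Ring.inverse (algebraMap ℂ (E →L[ℂ] E) z - T') =
        Ring.inverse (algebraMap ℂ (E →L[ℂ] E) z - T) *
          ∑ i ∈ Finset.range (m + 1),
            ((T' - T) * Ring.inverse (algebraMap ℂ (E →L[ℂ] E) z - T)) ^ i := by
    intro z hz
    have hu : IsUnit (algebraMap ℂ (E →L[ℂ] E) z - T) := spectrum.notMem_iff.mp hz
    set u : E →L[ℂ] E := algebraMap ℂ (E →L[ℂ] E) z - T with hu_def
    set R : E →L[ℂ] E := Ring.inverse u with hR_def
    set N : E →L[ℂ] E := T' - T with hN_def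
    set M : E →L[ℂ] E := N * R with hM_def
    have huR : u * R = 1 := Ring.mul_inverse_cancel u hu
    have hRu : R * u = 1 := Ring.inverse_mul_cancel u hu
    -- π i commutes with u, hence with R
    have hcommu : ∀ i, π i * u = u * π i := by
      intro i
      rw [hu_def, mul_sub, sub_mul, hcomm, Algebra.commutes]
    have hcommR : ∀ i, π i * R = R * π i := by
      intro i
      have h1 : Commute (π i) (hu.unit : E →L[ℂ] E) := by
        rw [IsUnit.unit_spec]; exact hcommu i
      have h2 := h1.units_inv_right
      have h3 : R = ((hu.unit)⁻¹ : (E →L[ℂ] E)ˣ) := by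
        have h4 := Ring.inverse_unit hu.unit
        rw [hu.unit_spec] at h4
        rw [hR_def, h4]
      rw [h3]; exact h2
    have hRrange : ∀ (i) (x : E), x ∈ LinearMap.range (π i : E →ₗ[ℂ] E) → R x ∈ LinearMap.range (π i : E →ₗ[ℂ] E) := by
      intro i x hx
      rw [hmem] at hx ⊢
      have := ContinuousLinearMap.ext_iff.mp (hcommR i) x
      simp only [ContinuousLinearMap.mul_apply] at this
      rw [this, hx]
    -- the filtration
    set F : ℕ → Submodule ℂ E :=
      fun k => ⨆ (j : Fin (m + 1)) (_ : k ≤ (j : ℕ)), LinearMap.range (π j : E →ₗ[ℂ] E) with hF_def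
    have hF_le : ∀ (j : Fin (m + 1)) (k : ℕ), k ≤ (j : ℕ) →
        LinearMap.range (π j : E →ₗ[ℂ] E) ≤ F k := by
      intro j k hk
      exact le_iSup₂_of_le j hk le_rfl
    have hF_top : ∀ x : E, x ∈ F 0 := by
      intro x
      rw [← hid x]
      exact Submodule.sum_mem _ fun j _ => hF_le j 0 (Nat.zero_le _) ⟨x, rfl⟩
    have hF_bot : F (m + 1) = ⊥ := by
      rw [eq_bot_iff]
      refine iSup₂_le fun j hj => absurd j.isLt (by omega)
    have hN_map : ∀ (k) (x : E), x ∈ F k → N x ∈ F (k + 1) := by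
      intro k x hx
      have hle : F k ≤ Submodule.comap (N.toLinearMap) (F (k + 1)) := by
        refine iSup₂_le fun j hj => fun y hy => ?_
        have h1 := hN j y hy
        have h2 : (⨆ j' > j, LinearMap.range (π j' : E →ₗ[ℂ] E) : Submodule ℂ E) ≤ F (k + 1) := by
          refine iSup₂_le fun j' hj' => hF_le j' (k + 1) ?_
          have : (j : ℕ) < (j' : ℕ) := hj'
          omega
        exact h2 h1
      exact hle hx
    have hR_map : ∀ (k) (x : E), x ∈ F k → R x ∈ F k := by
      intro k x hx
      have hle : F k ≤ Submodule.comap (R.toLinearMap) (F k) := by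
        refine iSup₂_le fun j hj => fun y hy => ?_
        exact hF_le j k hj (hRrange j y hy)
      exact hle hx
    have hM_map : ∀ (k) (x : E), x ∈ F k → M x ∈ F (k + 1) := by
      intro k x hx
      rw [hM_def, ContinuousLinearMap.mul_apply]
      exact hN_map k _ (hR_map k x hx)
    have hMpow : ∀ (n : ℕ) (x : E), (M ^ n) x ∈ F n := by
      intro n
      induction n with
      | zero => intro x; simpa using hF_top x
      | succ n ih =>
        intro x
        rw [pow_succ']
        rw [ContinuousLinearMap.mul_apply]
        exact hM_map n _ (ih x)
    have hMnil : M ^ (m + 1) = 0 := by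
      ext x
      have := hMpow (m + 1) x
      rw [hF_bot] at this
      simpa using this
    -- geometric series
    set S : E →L[ℂ] E := ∑ i ∈ Finset.range (m + 1), M ^ i with hS_def
    have h1 : S * (1 - M) = 1 := by
      have h := geom_sum_mul M (m + 1)
      rw [hMnil] at h
      have : S * (1 - M) = -(S * (M - 1)) := by noncomm_ring
      rw [this, hS_def, h]; simp
    have h2 : (1 - M) * S = 1 := by
      have h := mul_geom_sum M (m + 1)
      rw [hMnil] at h
      have : (1 - M) * S = -((M - 1) * S) := by noncomm_ring
      rw [this, hS_def, h]; simp
    have hMu : M * u = N := by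
      rw [hM_def, mul_assoc, hRu, mul_one]
    have hfact : algebraMap ℂ (E →L[ℂ] E) z - T' = (1 - M) * u := by
      rw [sub_mul, one_mul, hMu, hu_def, hN_def]
      abel
    have hV1 : ((1 - M) * u) * (R * S) = 1 := by
      rw [mul_assoc, ← mul_assoc u R S, huR, one_mul, h2]
    have hV2 : (R * S) * ((1 - M) * u) = 1 := by
      rw [mul_assoc, ← mul_assoc S, h1, one_mul, hRu]
    set V : (E →L[ℂ] E)ˣ := ⟨(1 - M) * u, R * S, hV1, hV2⟩ with hV_def
    constructor
    · rw [spectrum.notMem_iff, hfact]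
      exact ⟨V, rfl⟩
    · rw [hfact]
      exact Ring.inverse_unit V
  refine ⟨key, fun z hz => ?_⟩
  by_contra h
  exact (key z h).1 hz
end
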